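/- Let 0 < γ < 1 and let f ∈ H(𝔻) be 𝒰_{β^γ}-frequently hypercyclic for T_α. Then: if α ≤ 0, limsup_{r→1⁻} (1−r)^{−α} · M_1(f,r) = +∞; and if α > 0, limsup_{r→1⁻} M_1(f,r) > 0. -/

import Mathlib

open Filter Set MeasureTheory
open scoped Topology ENNReal Real Classical

noncomputable section

/-- The weighted Taylor shift `T_α` acting on Taylor-coefficient sequences:
`(T_α a) k = a (k+1) * (1 + 1/(k+1))^α`. -/
def Tshift (α : ℝ) (a : ℕ → ℂ) : ℕ → ℂ :=
  fun k => a (k + 1) * (((1 + 1 / ((k : ℝ) + 1)) ^ α : ℝ) : ℂ)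

/-- The holomorphic function on the unit disc determined by a coefficient sequence. -/
def sumFn (a : ℕ → ℂ) : ℂ → ℂ := fun z => ∑' k : ℕ, a k * z ^ k

/-- `a` is the Taylor-coefficient sequence of a function in `H(𝔻)`
(the power series converges on every disc of radius `r < 1`). -/
def InHD (a : ℕ → ℂ) : Prop :=
  ∀ r : ℝ, 0 ≤ r → r < 1 → Summable (fun k : ℕ => ‖a k‖ * r ^ k)

/-- The integral mean `M_p(f, r)`, `1 ≤ p ≤ ∞`, of the function with coefficient
sequence `a`. -/
def Mp (p : ℝ≥0∞) (a : ℕ → ℂ) (r : ℝ) : ℝ :=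
  if p = ∞ then
    sSup ((fun t : ℝ => ‖sumFn a (r * Complex.exp (Complex.I * t))‖) '' Set.Icc 0 (2 * π))
  else
    (1 / (2 * π) * ∫ t in (0:ℝ)..(2 * π),
      ‖sumFn a (r * Complex.exp (Complex.I * t))‖ ^ p.toReal) ^ (1 / p.toReal)

/-- Upper weighted density of `A ⊆ ℕ` associated with a weight sequence `β`. -/
def upperDensityWt (β : ℕ → ℝ) (A : Set ℕ) : ℝ :=
  Filter.limsup (fun n : ℕ =>
    (∑ k ∈ Finset.Icc 1 n, A.indicator (fun j => β j) k) / ∑ k ∈ Finset.Icc 1 n, β k)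
    Filter.atTop

/-- The weight sequence `β^γ = (e^{n^γ})`. -/
def betaGamma (γ : ℝ) : ℕ → ℝ := fun n => Real.exp ((n : ℝ) ^ γ)

/-- `a` is hypercyclic for `T_α`: its orbit is dense in `H(𝔻)` for the topology of
uniform convergence on compact subsets of the unit disc. -/
def Hypercyclic (α : ℝ) (a : ℕ → ℂ) : Prop :=
  ∀ b : ℕ → ℂ, InHD b → ∀ K : Set ℂ, IsCompact K → K ⊆ Metric.ball (0 : ℂ) 1 →
    ∀ ε : ℝ, 0 < ε → ∃ n : ℕ, ∀ z ∈ K, ‖sumFn ((Tshift α)^[n] a) z - sumFn b z‖ < ε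

/-- `a` is `𝒰_β`-frequently hypercyclic for `T_α`: for every nonempty basic open set of
`H(𝔻)`, the set of return times has positive upper `β`-density. -/
def UFHCwt (β : ℕ → ℝ) (α : ℝ) (a : ℕ → ℂ) : Prop :=
  ∀ b : ℕ → ℂ, InHD b → ∀ K : Set ℂ, IsCompact K → K ⊆ Metric.ball (0 : ℂ) 1 →
    ∀ ε : ℝ, 0 < ε →
      0 < upperDensityWt β
        {n : ℕ | ∀ z ∈ K, ‖sumFn ((Tshift α)^[n] a) z - sumFn b z‖ < ε}

/-- `a` is `𝒰`-frequently hypercyclic for `T_α` (natural upper density of return times). -/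
def UFreqHC (α : ℝ) (a : ℕ → ℂ) : Prop := UFHCwt (fun _ => 1) α a

/-- The conjugate exponent `q` of `p` (`q = 1` when `p = ∞`). -/
def qConj (p : ℝ≥0∞) : ℝ := if p = ∞ then 1 else p.toReal / (p.toReal - 1)

/-- The quantity `1 / max(2, q)`, interpreted as `0` when `p = 1`. -/
def critFactor (p : ℝ≥0∞) : ℝ := if p = 1 then 0 else 1 / max 2 (qConj p)

/-- `limsup_{r → 1⁻}` of a real-valued function of `r ∈ (0,1)`, computed in `EReal`. -/
def limsupR (g : ℝ → ℝ) : EReal :=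
  Filter.limsup (fun r : ℝ => (g r : EReal)) (nhdsWithin 1 (Set.Ioo 0 1))

end


noncomputable section

lemma Tshift_iterate (α : ℝ) (a : ℕ → ℂ) : ∀ n k, ((Tshift α)^[n] a) k
    = a (k + n) * (((((k:ℝ) + n + 1) / ((k:ℝ) + 1)) ^ α : ℝ) : ℂ) := by
  intro n
  induction n with
  | zero =>
    intro k
    simp only [Function.iterate_zero, id_eq, Nat.add_zero, Nat.cast_zero, add_zero]
    rw [div_self (by positivity : ((k:ℝ)+1) ≠ 0), Real.one_rpow]
    simp
  | succ n ih =>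
    intro k
    rw [Function.iterate_succ_apply', Tshift]
    rw [ih (k+1)]
    have h1 : (0:ℝ) ≤ ((↑(k+1):ℝ) + n + 1)/((↑(k+1):ℝ) + 1) := by positivity
    have h2 : (0:ℝ) ≤ 1 + 1/((k:ℝ)+1) := by positivity
    rw [mul_assoc]
    congr 1
    · congr 1; omega
    · rw [← Complex.ofReal_mul, ← Real.mul_rpow h1 h2]
      congr 2
      have hk1 : ((k:ℝ)+1) ≠ 0 := by positivity
      have hk2 : ((↑(k+1):ℝ)+1) ≠ 0 := by positivity
      push_cast at hk2 ⊢
      field_simp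
      ring

lemma Tshift_iterate0 (α : ℝ) (a : ℕ → ℂ) (n : ℕ) :
    ((Tshift α)^[n] a) 0 = a n * ((((n:ℝ) + 1) ^ α : ℝ) : ℂ) := by
  rw [Tshift_iterate]
  norm_num

lemma sumFn_zero (c : ℕ → ℂ) : sumFn c 0 = c 0 := by
  rw [sumFn, tsum_eq_single 0]
  · simp
  · intro k hk; simp [zero_pow hk]

lemma Mp_one (a : ℕ → ℂ) (r : ℝ) :
    Mp 1 a r = 1 / (2*π) * ∫ t in (0:ℝ)..(2*π), ‖sumFn a (r * Complex.exp (Complex.I * t))‖ := by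
  rw [Mp, if_neg (by simp : (1:ℝ≥0∞) ≠ ∞)]
  simp [Real.rpow_one]

lemma exists_large (γ : ℝ) (hγ0 : 0 < γ) (S : Set ℕ)
    (hS : 0 < upperDensityWt (betaGamma γ) S) :
    ∀ m : ℕ, ∃ n, m ≤ n ∧ n ∈ S := by
  intro m
  by_contra hcon
  push_neg at hcon
  set β := betaGamma γ with hβ
  have hβ1 : ∀ k : ℕ, 1 ≤ k → 1 ≤ β k := by
    intro k hk
    have : (1:ℝ) ≤ (k:ℝ) ^ γ := by
      apply Real.one_le_rpow (by exact_mod_cast hk) hγ0.le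
    calc (1:ℝ) ≤ Real.exp 1 := by nlinarith [Real.add_one_le_exp 1]
    _ ≤ Real.exp ((k:ℝ)^γ) := Real.exp_le_exp.2 this
  have hβ0 : ∀ k : ℕ, 0 ≤ β k := fun k => (Real.exp_pos _).le
  set C : ℝ := ∑ k ∈ Finset.range m, β k with hC
  have hC0 : 0 ≤ C := Finset.sum_nonneg fun k _ => hβ0 k
  have hnum : ∀ n : ℕ, (∑ k ∈ Finset.Icc 1 n, S.indicator (fun j => β j) k) ≤ C := by
    intro n
    calc (∑ k ∈ Finset.Icc 1 n, S.indicator (fun j => β j) k)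
        ≤ ∑ k ∈ Finset.Icc 1 n, (if k < m then β k else 0) := by
          apply Finset.sum_le_sum
          intro k _
          by_cases hk : k < m
          · rw [if_pos hk]
            exact Set.indicator_le_self' (fun j _ => hβ0 j) k
          · rw [if_neg hk]
            have : k ∉ S := hcon k (by omega)
            simp [Set.indicator_of_notMem this]
      _ = ∑ k ∈ (Finset.Icc 1 n).filter (· < m), β k := by
          rw [Finset.sum_filter]
      _ ≤ C := by
          apply Finset.sum_le_sum_of_subset_of_nonneg
          · intro k hk
            simp only [Finset.mem_filter, Finset.mem_Icc] at hk
            simp [Finset.mem_range]; omega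
          · intro k _ _; exact hβ0 k
  have hden : ∀ n : ℕ, (n:ℝ) ≤ ∑ k ∈ Finset.Icc 1 n, β k := by
    intro n
    have : (n:ℝ) = ∑ k ∈ Finset.Icc 1 n, (1:ℝ) := by
      simp [Nat.card_Icc]
    rw [this]
    exact Finset.sum_le_sum fun k hk => hβ1 k (Finset.mem_Icc.1 hk).1
  have htend : Tendsto (fun n : ℕ =>
      (∑ k ∈ Finset.Icc 1 n, S.indicator (fun j => β j) k) / ∑ k ∈ Finset.Icc 1 n, β k)
      atTop (𝓝 0) := by
    apply tendsto_of_tendsto_of_tendsto_of_le_of_le' tendsto_const_nhds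
      (tendsto_const_div_atTop_nhds_zero_nat C)
    · filter_upwards [eventually_ge_atTop 1] with n hn
      apply div_nonneg
      · exact Finset.sum_nonneg fun k _ => Set.indicator_nonneg (fun j _ => hβ0 j) k
      · exact le_trans (by exact_mod_cast Nat.zero_le n) (hden n)
    · filter_upwards [eventually_ge_atTop 1] with n hn
      have hd : (0:ℝ) < (n:ℝ) := by exact_mod_cast hn
      exact div_le_div₀ hC0 (hnum n) hd (hden n)
  have : upperDensityWt β S = 0 := htend.limsup_eq
  rw [hβ] at this
  rw [this] at hS
  exact lt_irrefl 0 hS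


lemma coeff_bound_int (a : ℕ → ℂ) (ha : InHD a) {r : ℝ} (hr0 : 0 ≤ r) (hr1 : r < 1) (n : ℕ) :
    ‖a n‖ * r ^ n * (2*π) ≤ ∫ t in (0:ℝ)..(2*π), ‖sumFn a (r * Complex.exp (Complex.I * t))‖ := by
  have hπ : (0:ℝ) < π := Real.pi_pos
  have hu : Summable (fun k : ℕ => ‖a k‖ * r ^ k) := ha r hr0 hr1
  set u : ℕ → ℝ := fun k => ‖a k‖ * r ^ k with hu_def
  set c : ℕ → ℝ → ℂ :=
    fun k t => (a k * (r:ℂ) ^ k) * Complex.exp ((((k:ℂ) - n) * Complex.I) * t) with hc_def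
  -- norms of the terms
  have hexp1 : ∀ (z : ℂ) (x : ℝ), z.im = 0 → ‖Complex.exp ((z * Complex.I) * x)‖ = 1 := by
    intro z x hz
    have hz' : z = (z.re : ℂ) := Complex.ext rfl (by simp [hz])
    have : (z * Complex.I) * x = ((z.re * x : ℝ) : ℂ) * Complex.I := by
      conv_lhs => rw [hz']
      rw [Complex.ofReal_mul]
      ring
    rw [this, Complex.norm_exp_ofReal_mul_I]
  have him : ∀ k : ℕ, ((k:ℂ) - n).im = 0 := by intro k; simp
  have hcnorm : ∀ k t, ‖c k t‖ = u k := by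
    intro k t
    rw [hc_def]
    simp only [norm_mul, norm_pow, Complex.norm_real]
    rw [hexp1 _ _ (him k), Real.norm_of_nonneg hr0, mul_one]
  -- continuity
  have hc_cont : ∀ k, Continuous (c k) := by
    intro k
    exact continuous_const.mul (Complex.continuous_exp.comp
      (continuous_const.mul Complex.continuous_ofReal))
  -- summability at each point
  have hsum : ∀ t : ℝ, Summable (fun k => c k t) := by
    intro t
    apply Summable.of_norm
    exact hu.congr fun k => (hcnorm k t).symm
  -- F' = the product function equals the tsum of c
  have hF_eq : ∀ t : ℝ, sumFn a ((r:ℂ) * Complex.exp (Complex.I * t))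
      * Complex.exp ((-(n:ℂ) * Complex.I) * t) = ∑' k, c k t := by
    intro t
    rw [sumFn, ← tsum_mul_right]
    apply tsum_congr
    intro k
    have h : Complex.exp ((k:ℂ) * (Complex.I * t)) * Complex.exp ((-(n:ℂ) * Complex.I) * t)
        = Complex.exp ((((k:ℂ) - n) * Complex.I) * t) := by
      rw [← Complex.exp_add]; congr 1; ring
    calc a k * ((r:ℂ) * Complex.exp (Complex.I * t))^k * Complex.exp ((-(n:ℂ) * Complex.I) * t)
        = a k * (r:ℂ)^k * (Complex.exp ((k:ℂ) * (Complex.I * t))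
            * Complex.exp ((-(n:ℂ) * Complex.I) * t)) := by
          rw [mul_pow, ← Complex.exp_nat_mul]; ring
      _ = c k t := by rw [h]
  set F' : ℝ → ℂ := fun t => ∑' k, c k t with hF'_def
  have hF'_cont : Continuous F' :=
    continuous_tsum hc_cont hu fun k t => le_of_eq (hcnorm k t)
  -- orthogonality
  have hint : ∀ k, (∫ t in (0:ℝ)..(2*π), c k t)
      = if k = n then (a n * (r:ℂ)^n) * ((2*π:ℝ):ℂ) else 0 := by
    intro k
    rw [hc_def]
    simp only []
    rw [intervalIntegral.integral_const_mul]
    by_cases hk : k = n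
    · subst hk
      rw [if_pos rfl]
      have hz : ∀ t : ℝ, (((k:ℂ) - k) * Complex.I) * t = 0 := by
        intro t; rw [sub_self, zero_mul, zero_mul]
      simp only [hz, Complex.exp_zero]
      rw [intervalIntegral.integral_const]
      simp [Complex.real_smul]
    · rw [if_neg hk]
      have hm : ((k:ℂ) - n) * Complex.I ≠ 0 := by
        apply mul_ne_zero _ Complex.I_ne_zero
        rw [sub_ne_zero]
        exact_mod_cast hk
      rw [integral_exp_mul_complex hm]
      have h1 : (((k:ℂ) - n) * Complex.I) * ((2*π:ℝ):ℂ)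
          = (((k:ℤ) - n : ℤ):ℂ) * (2 * (π:ℂ) * Complex.I) := by push_cast; ring
      rw [h1, Complex.exp_int_mul_two_pi_mul_I]
      simp
  -- integral of partial sums
  have hSN : ∀ N, n < N → (∫ t in (0:ℝ)..(2*π), ∑ k ∈ Finset.range N, c k t)
      = (a n * (r:ℂ)^n) * ((2*π:ℝ):ℂ) := by
    intro N hN
    rw [intervalIntegral.integral_finset_sum
      (fun k _ => ((hc_cont k).intervalIntegrable _ _))]
    rw [Finset.sum_congr rfl fun k _ => hint k]
    rw [Finset.sum_ite_eq' (Finset.range N) n fun _ => (a n * (r:ℂ)^n) * ((2*π:ℝ):ℂ)]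
    rw [if_pos (Finset.mem_range.2 hN)]
  -- tail bound
  set tail : ℕ → ℝ := fun N => ∑' k, u (k + N) with htail_def
  have htail : ∀ N t, ‖F' t - ∑ k ∈ Finset.range N, c k t‖ ≤ tail N := by
    intro N t
    have hs := Summable.sum_add_tsum_nat_add N (hsum t)
    have : F' t - ∑ k ∈ Finset.range N, c k t = ∑' k, c (k + N) t := by
      rw [hF'_def]; simp only []; rw [← hs]; ring
    rw [this]
    have hsn : Summable fun k => ‖c (k + N) t‖ :=
      ((summable_nat_add_iff N).2 hu).congr fun k => (hcnorm (k + N) t).symm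
    calc ‖∑' k, c (k + N) t‖ ≤ ∑' k, ‖c (k + N) t‖ := norm_tsum_le_tsum_norm hsn
      _ = tail N := tsum_congr fun k => hcnorm (k + N) t
  -- the integral J
  set J : ℝ := ∫ t in (0:ℝ)..(2*π), ‖sumFn a ((r:ℂ) * Complex.exp (Complex.I * t))‖ with hJ_def
  have hFnorm : ∀ t : ℝ, ‖F' t‖ = ‖sumFn a ((r:ℂ) * Complex.exp (Complex.I * t))‖ := by
    intro t
    rw [hF'_def]
    simp only []
    rw [← hF_eq t, norm_mul, hexp1 _ _ (by simp), mul_one]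
  have hJ : ‖∫ t in (0:ℝ)..(2*π), F' t‖ ≤ J := by
    calc ‖∫ t in (0:ℝ)..(2*π), F' t‖ ≤ ∫ t in (0:ℝ)..(2*π), ‖F' t‖ :=
          intervalIntegral.norm_integral_le_integral_norm (by positivity)
      _ = J := by rw [hJ_def]; exact intervalIntegral.integral_congr fun t _ => hFnorm t
  -- key estimate for each N > n
  have hkey : ∀ N, n < N → ‖a n‖ * r ^ n * (2*π) ≤ tail N * (2*π) + J := by
    intro N hN
    have hSNint : IntervalIntegrable (fun t => ∑ k ∈ Finset.range N, c k t)
        volume 0 (2*π) :=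
      (continuous_finset_sum _ fun k _ => hc_cont k).intervalIntegrable _ _
    have hF'int : IntervalIntegrable F' volume 0 (2*π) := hF'_cont.intervalIntegrable _ _
    have heq : ‖a n‖ * r ^ n * (2*π) = ‖(a n * (r:ℂ)^n) * ((2*π:ℝ):ℂ)‖ := by
      rw [norm_mul, norm_mul, norm_pow, Complex.norm_real, Complex.norm_real,
        Real.norm_of_nonneg hr0, Real.norm_of_nonneg (by positivity : (0:ℝ) ≤ 2*π)]
    rw [heq, ← hSN N hN]
    have hdiff : ‖(∫ t in (0:ℝ)..(2*π), ∑ k ∈ Finset.range N, c k t)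
        - ∫ t in (0:ℝ)..(2*π), F' t‖ ≤ tail N * (2*π) := by
      rw [← intervalIntegral.integral_sub hSNint hF'int]
      have := intervalIntegral.norm_integral_le_of_norm_le_const
        (a := 0) (b := 2*π) (C := tail N)
        (f := fun t => (∑ k ∈ Finset.range N, c k t) - F' t) ?_
      · calc ‖∫ t in (0:ℝ)..(2*π), (∑ k ∈ Finset.range N, c k t) - F' t‖
            ≤ tail N * |2*π - 0| := this
          _ = tail N * (2*π) := by rw [sub_zero, abs_of_pos (by positivity)]
      · intro x _
        rw [← norm_neg]
        simpa [neg_sub] using htail N x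
    have htri : ∀ x y : ℂ, ‖x‖ ≤ ‖x - y‖ + ‖y‖ := by
      intro x y
      calc ‖x‖ = ‖(x - y) + y‖ := by rw [sub_add_cancel]
        _ ≤ ‖x - y‖ + ‖y‖ := norm_add_le _ _
    calc ‖∫ t in (0:ℝ)..(2*π), ∑ k ∈ Finset.range N, c k t‖
        ≤ ‖(∫ t in (0:ℝ)..(2*π), ∑ k ∈ Finset.range N, c k t)
          - ∫ t in (0:ℝ)..(2*π), F' t‖ + ‖∫ t in (0:ℝ)..(2*π), F' t‖ := htri _ _
      _ ≤ tail N * (2*π) + J := add_le_add hdiff hJ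
  have htails : Tendsto (fun N => tail N * (2*π) + J) atTop (𝓝 (0 * (2*π) + J)) :=
    ((tendsto_sum_nat_add u).mul_const _).add_const J
  rw [zero_mul, zero_add] at htails
  refine ge_of_tendsto htails ?_
  filter_upwards [eventually_gt_atTop n] with N hN
  exact hkey N hN


end

/-- Theorem 4.11 (lower estimates, `p = 1`): growth of `𝒰_{β^γ}`-frequently hypercyclic
functions for `T_α`, `0 < γ < 1`. -/
theorem stmt14 (γ : ℝ) (hγ0 : 0 < γ) (hγ1 : γ < 1) (α : ℝ) (a : ℕ → ℂ)
    (ha : InHD a) (hfa : UFHCwt (betaGamma γ) α a) :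
    (α ≤ 0 → limsupR (fun r => (1 - r) ^ (-α) * Mp 1 a r) = ⊤) ∧
    (0 < α → 0 < limsupR (fun r => Mp 1 a r)) := by
  have hπ : (0:ℝ) < π := Real.pi_pos
  haveI hNB : (𝓝[Set.Ioo (0:ℝ) 1] 1).NeBot := by
    rw [← mem_closure_iff_nhdsWithin_neBot, closure_Ioo (by norm_num : (0:ℝ) ≠ 1)]
    exact ⟨by norm_num, le_rfl⟩
  have hMp : ∀ n : ℕ, ∀ r : ℝ, 0 ≤ r → r < 1 → ‖a n‖ * r ^ n ≤ Mp 1 a r := by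
    intro n r h0 h1
    rw [Mp_one, one_div, ← div_eq_inv_mul, le_div_iff₀ (by positivity)]
    exact coeff_bound_int a ha h0 h1 n
  have hcoef : ∀ c : ℝ, 0 < c → ∀ m : ℕ, ∃ n, m ≤ n ∧ c - 1 < ‖a n‖ * ((n:ℝ)+1) ^ α := by
    intro c hc m
    set b : ℕ → ℂ := fun k => if k = 0 then (c:ℂ) else 0 with hb
    have hbHD : InHD b := by
      intro ρ h0 h1
      apply summable_of_ne_finset_zero (s := {0})
      intro k hk
      simp only [Finset.mem_singleton] at hk
      simp [hb, hk]
    have hKb : ({0} : Set ℂ) ⊆ Metric.ball 0 1 := by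
      intro z hz
      simp only [Set.mem_singleton_iff] at hz
      simp [hz, Metric.mem_ball]
    have hd := hfa b hbHD {0} isCompact_singleton hKb 1 one_pos
    obtain ⟨n, hmn, hnS⟩ := exists_large γ hγ0 _ hd m
    refine ⟨n, hmn, ?_⟩
    have h0 := hnS 0 rfl
    rw [sumFn_zero, sumFn_zero, Tshift_iterate0] at h0
    have hb0 : b 0 = (c:ℂ) := by simp [hb]
    rw [hb0] at h0
    set w : ℝ := ((n:ℝ) + 1) ^ α with hw
    have hw0 : 0 ≤ w := Real.rpow_nonneg (by positivity) α
    have e1 : ‖(c:ℂ)‖ = c := by rw [Complex.norm_real, Real.norm_of_nonneg hc.le]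
    have e2 : ‖a n * (w:ℂ)‖ = ‖a n‖ * w := by
      rw [norm_mul, Complex.norm_real, Real.norm_of_nonneg hw0]
    have e3 : ‖(c:ℂ)‖ - ‖a n * (w:ℂ)‖ ≤ ‖(c:ℂ) - a n * (w:ℂ)‖ := norm_sub_norm_le _ _
    have e4 : ‖(c:ℂ) - a n * (w:ℂ)‖ = ‖a n * (w:ℂ) - (c:ℂ)‖ := norm_sub_rev _ _
    rw [e4, e1, e2] at e3
    linarith
  constructor
  · -- part 1 : α ≤ 0
    intro hα
    rw [limsupR, EReal.eq_top_iff_forall_lt]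
    intro C
    have key : ∃ᶠ r in 𝓝[Set.Ioo (0:ℝ) 1] 1,
        ((C + 1 : ℝ) : EReal) ≤ (((1 - r) ^ (-α) * Mp 1 a r : ℝ) : EReal) := by
      rw [Filter.frequently_iff]
      intro U hU
      rw [Metric.mem_nhdsWithin_iff] at hU
      obtain ⟨δ, hδ, hsub⟩ := hU
      set c : ℝ := 3 * max C 0 + 4 with hc_def
      have hc : 0 < c := by nlinarith [le_max_right C 0]
      obtain ⟨n, hmn, hn⟩ := hcoef c hc (max 1 ⌈1/δ⌉₊)
      have hn1 : 1 ≤ n := le_trans (le_max_left _ _) hmn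
      have hn0 : (0:ℝ) < (n:ℝ) := by exact_mod_cast hn1
      have hnδ : 1/((n:ℝ)+1) < δ := by
        have h1 : (⌈1/δ⌉₊ : ℝ) ≤ n := by exact_mod_cast le_trans (le_max_right _ _) hmn
        have h2 : 1/δ ≤ (n:ℝ) := le_trans (Nat.le_ceil _) h1
        rw [div_lt_iff₀ (by positivity)]
        have h3 : 1 ≤ (n:ℝ) * δ := by
          rw [div_le_iff₀ hδ] at h2
          linarith
        nlinarith
      set r : ℝ := 1 - 1/((n:ℝ)+1) with hr_def
      have hfr : 0 < 1/((n:ℝ)+1) := by positivity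
      have hn0' : (1:ℝ) ≤ (n:ℝ) := by exact_mod_cast hn1
      have hfr2 : 1/((n:ℝ)+1) ≤ 1/2 := by
        rw [div_le_div_iff₀ (by positivity) (by norm_num)]
        linarith
      have hr0 : 0 < r := by rw [hr_def]; linarith
      have hr1 : r < 1 := by rw [hr_def]; linarith
      have hball : r ∈ Metric.ball (1:ℝ) δ := by
        rw [Metric.mem_ball, Real.dist_eq, hr_def]
        rw [show (1 - 1/((n:ℝ)+1)) - 1 = -(1/((n:ℝ)+1)) by ring, abs_neg,
          abs_of_pos hfr]
        exact hnδ
      refine ⟨r, hsub ⟨hball, hr0, hr1⟩, ?_⟩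
      have h1r : 1 - r = 1/((n:ℝ)+1) := by rw [hr_def]; ring
      have hpow : (1 - r) ^ (-α) = ((n:ℝ)+1) ^ α := by
        rw [h1r, one_div, Real.inv_rpow (by positivity), Real.rpow_neg (by positivity),
          inv_inv]
      have hMpr : ‖a n‖ * r ^ n ≤ Mp 1 a r := hMp n r hr0.le hr1
      have hrn : (1:ℝ)/3 ≤ r ^ n := by
        have hncast : ((n:ℝ)) ≠ 0 := ne_of_gt hn0
        have hr_eq : r = (1 + 1/(n:ℝ))⁻¹ := by
          rw [hr_def]
          field_simp
          ring
        have hb1 : (1 + 1/(n:ℝ)) ^ n ≤ Real.exp 1 := by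
          have hh : 1/(n:ℝ) + 1 ≤ Real.exp (1/(n:ℝ)) := Real.add_one_le_exp _
          calc (1 + 1/(n:ℝ)) ^ n ≤ (Real.exp (1/(n:ℝ))) ^ n := by
                apply pow_le_pow_left₀ (by positivity) (by linarith) n
            _ = Real.exp ((n:ℝ) * (1/(n:ℝ))) := by rw [Real.exp_nat_mul]
            _ = Real.exp 1 := by rw [mul_one_div, div_self hncast]
        have hb3 : (1 + 1/(n:ℝ)) ^ n ≤ 3 := by
          have : Real.exp 1 < 3 := lt_trans Real.exp_one_lt_d9 (by norm_num)
          linarith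
        have hp : (0:ℝ) < (1 + 1/(n:ℝ)) ^ n := by positivity
        rw [hr_eq, inv_pow, show (1:ℝ)/3 = 3⁻¹ from one_div 3]
        exact inv_anti₀ hp hb3
      have hpowpos : 0 < ((n:ℝ)+1) ^ α := Real.rpow_pos_of_pos (by positivity) α
      have hfinal : C + 1 ≤ (1 - r) ^ (-α) * Mp 1 a r := by
        calc C + 1 ≤ (c - 1) * (1/3) := by
              rw [hc_def]
              nlinarith [le_max_left C 0, le_max_right C 0]
          _ ≤ (‖a n‖ * ((n:ℝ)+1) ^ α) * r ^ n := by
              apply mul_le_mul hn.le hrn (by norm_num) (by positivity)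
          _ = ((n:ℝ)+1) ^ α * (‖a n‖ * r ^ n) := by ring
          _ ≤ ((n:ℝ)+1) ^ α * Mp 1 a r := mul_le_mul_of_nonneg_left hMpr hpowpos.le
          _ = (1 - r) ^ (-α) * Mp 1 a r := by rw [hpow]
      exact_mod_cast hfinal
    have hle := Filter.le_limsup_of_frequently_le key
    exact lt_of_lt_of_le (by exact_mod_cast lt_add_one C) hle
  · -- part 2 : 0 < α
    intro hα
    obtain ⟨n, -, hn⟩ := hcoef 2 two_pos 0
    have han : 0 < ‖a n‖ := by
      rcases eq_or_lt_of_le (norm_nonneg (a n)) with h | h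
      · rw [← h, zero_mul] at hn; norm_num at hn
      · exact h
    set cst : ℝ := ‖a n‖ / 2 with hcst_def
    have hcst : 0 < cst := by positivity
    have hev : ∀ᶠ r in 𝓝[Set.Ioo (0:ℝ) 1] 1,
        ((cst : ℝ) : EReal) ≤ ((Mp 1 a r : ℝ) : EReal) := by
      have hcont : Continuous (fun r : ℝ => ‖a n‖ * r ^ n) := by continuity
      have ht : Tendsto (fun r : ℝ => ‖a n‖ * r ^ n) (𝓝[Set.Ioo (0:ℝ) 1] 1)
          (𝓝 (‖a n‖)) := by
        have := (hcont.tendsto 1).mono_left (nhdsWithin_le_nhds (s := Set.Ioo (0:ℝ) 1))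
        simpa using this
      have hev1 := ht.eventually (eventually_ge_nhds (by rw [hcst_def]; linarith : cst < ‖a n‖))
      filter_upwards [hev1, self_mem_nhdsWithin] with r h1 h2
      have h3 : cst ≤ Mp 1 a r := le_trans h1 (hMp n r h2.1.le h2.2)
      exact_mod_cast h3
    have hle : ((cst : ℝ) : EReal) ≤ limsupR (fun r => Mp 1 a r) := by
      rw [limsupR]
      calc ((cst : ℝ) : EReal)
          = Filter.limsup (fun _ : ℝ => ((cst : ℝ) : EReal)) (𝓝[Set.Ioo (0:ℝ) 1] 1) :=
            (Filter.limsup_const _).symm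
        _ ≤ _ := Filter.limsup_le_limsup hev
    calc (0 : EReal) < ((cst : ℝ) : EReal) := by exact_mod_cast hcst
      _ ≤ _ := hle
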